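/- Let E be a Banach lattice f-algebra in which every positive element can be written as a product of two positive elements. If x_α is mn-convergent to x and y_β is mn-convergent to y, then the product net (x_α y_β) indexed by the product directed set is mn-convergent to xy. -/

import Mathlib

open Filter

class BanachLatticeFAlgebra (E : Type*) extends NonUnitalNormedRing E, Lattice E where
  add_le_add_left : ∀ a b : E, a ≤ b → ∀ c : E, c + a ≤ c + b
  mul_nonneg : ∀ a b : E, 0 ≤ a → 0 ≤ b → 0 ≤ a * b
  inf_mul_right : ∀ a b c : E, 0 ≤ c → a ⊓ b = 0 → (a * c) ⊓ b = 0
  inf_mul_left : ∀ a b c : E, 0 ≤ c → a ⊓ b = 0 → (c * a) ⊓ b = 0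
  archimedean : ∀ a b : E, 0 ≤ a → (∀ n : ℕ, n • a ≤ b) → a ≤ 0
  solid_norm : ∀ a b : E, a ⊔ -a ≤ b ⊔ -b → ‖a‖ ≤ ‖b‖

/-- The lattice absolute value `|x| = x ⊔ (-x)`. -/
def latAbs {E : Type*} [BanachLatticeFAlgebra E] (x : E) : E := x ⊔ -x

/-- A net `x` is multiplicative norm (mn-) convergent to `x₀` along the filter `l`
if `‖|x i - x₀| u‖ → 0` for every positive `u`. -/
def MnTendsto {E : Type*} [BanachLatticeFAlgebra E] {ι : Type*} (l : Filter ι)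
    (x : ι → E) (x₀ : E) : Prop :=
  ∀ u : E, 0 ≤ u → Tendsto (fun i => ‖latAbs (x i - x₀) * u‖) l (nhds 0)

namespace MnAux

variable {E : Type*} [BanachLatticeFAlgebra E]

instance : AddLeftMono E := ⟨fun c a b h => BanachLatticeFAlgebra.add_le_add_left a b h c⟩

instance : AddRightMono E :=
  ⟨fun c a b h => by
    simpa [add_comm] using BanachLatticeFAlgebra.add_le_add_left a b h c⟩

theorem latAbs_eq (x : E) : latAbs x = |x| := rfl

theorem bmul_nonneg {a b : E} (ha : 0 ≤ a) (hb : 0 ≤ b) : 0 ≤ a * b :=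
  BanachLatticeFAlgebra.mul_nonneg a b ha hb

theorem bmul_le_mul_left {a b : E} (c : E) (hc : 0 ≤ c) (h : a ≤ b) : c * a ≤ c * b := by
  have h1 : 0 ≤ c * (b - a) := bmul_nonneg hc (sub_nonneg.2 h)
  rw [mul_sub] at h1
  exact sub_nonneg.1 h1

theorem bmul_le_mul_right {a b : E} (c : E) (hc : 0 ≤ c) (h : a ≤ b) : a * c ≤ b * c := by
  have h1 : 0 ≤ (b - a) * c := bmul_nonneg (sub_nonneg.2 h) hc
  rw [sub_mul] at h1
  exact sub_nonneg.1 h1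

theorem mul_eq_zero_of_inf {a b : E} (h : a ⊓ b = 0) : a * b = 0 := by
  have ha : 0 ≤ a := h ▸ inf_le_left
  have hb : 0 ≤ b := h ▸ inf_le_right
  have h1 : (a * b) ⊓ a = 0 :=
    BanachLatticeFAlgebra.inf_mul_left b a a ha (by rwa [inf_comm] at h)
  have h2 : (a * b) ⊓ (a * b) = 0 :=
    BanachLatticeFAlgebra.inf_mul_right a (a * b) b hb (by rwa [inf_comm] at h1)
  rw [inf_idem] at h2; exact h2

theorem posPart_mul_negPart (x : E) : x⁺ * x⁻ = 0 :=
  mul_eq_zero_of_inf (posPart_inf_negPart_eq_zero x)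

theorem negPart_mul_posPart (x : E) : x⁻ * x⁺ = 0 :=
  mul_eq_zero_of_inf (by rw [inf_comm]; exact posPart_inf_negPart_eq_zero x)

theorem sq_nonneg' (x : E) : 0 ≤ x * x := by
  have : x * x = x⁺ * x⁺ + x⁻ * x⁻ := by
    calc x * x = (x⁺ - x⁻) * (x⁺ - x⁻) := by rw [posPart_sub_negPart]
    _ = (x⁺ * x⁺ - x⁺ * x⁻) - (x⁻ * x⁺ - x⁻ * x⁻) := by rw [sub_mul, mul_sub, mul_sub]
    _ = x⁺ * x⁺ + x⁻ * x⁻ := by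
        rw [posPart_mul_negPart, negPart_mul_posPart]; abel
  rw [this]
  exact add_nonneg (bmul_nonneg (posPart_nonneg x) (posPart_nonneg x))
    (bmul_nonneg (negPart_nonneg x) (negPart_nonneg x))

theorem latAbs_mul_le (a b : E) : |a * b| ≤ |a| * |b| := by
  have hdecomp : a * b = a⁺ * b⁺ - a⁺ * b⁻ - a⁻ * b⁺ + a⁻ * b⁻ := by
    calc a * b = (a⁺ - a⁻) * (b⁺ - b⁻) := by rw [posPart_sub_negPart, posPart_sub_negPart]
    _ = a⁺ * b⁺ - a⁺ * b⁻ - a⁻ * b⁺ + a⁻ * b⁻ := by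
        rw [sub_mul, mul_sub, mul_sub]; abel
  have habs : |a| * |b| = a⁺ * b⁺ + a⁺ * b⁻ + a⁻ * b⁺ + a⁻ * b⁻ := by
    calc |a| * |b| = (a⁺ + a⁻) * (b⁺ + b⁻) := by rw [posPart_add_negPart, posPart_add_negPart]
    _ = a⁺ * b⁺ + a⁺ * b⁻ + a⁻ * b⁺ + a⁻ * b⁻ := by rw [add_mul, mul_add, mul_add]; abel
  have h1 : 0 ≤ a⁺ * b⁺ := bmul_nonneg (posPart_nonneg a) (posPart_nonneg b)
  have h2 : 0 ≤ a⁺ * b⁻ := bmul_nonneg (posPart_nonneg a) (negPart_nonneg b)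
  have h3 : 0 ≤ a⁻ * b⁺ := bmul_nonneg (negPart_nonneg a) (posPart_nonneg b)
  have h4 : 0 ≤ a⁻ * b⁻ := bmul_nonneg (negPart_nonneg a) (negPart_nonneg b)
  have hle : a * b ≤ |a| * |b| := by
    rw [hdecomp, habs, ← sub_nonneg]
    have he : a⁺ * b⁺ + a⁺ * b⁻ + a⁻ * b⁺ + a⁻ * b⁻ -
        (a⁺ * b⁺ - a⁺ * b⁻ - a⁻ * b⁺ + a⁻ * b⁻) = (a⁺ * b⁻ + a⁺ * b⁻) + (a⁻ * b⁺ + a⁻ * b⁺) := by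
      abel
    rw [he]
    exact add_nonneg (add_nonneg h2 h2) (add_nonneg h3 h3)
  have hle' : -(a * b) ≤ |a| * |b| := by
    rw [hdecomp, habs, ← sub_nonneg]
    have he : a⁺ * b⁺ + a⁺ * b⁻ + a⁻ * b⁺ + a⁻ * b⁻ -
        -(a⁺ * b⁺ - a⁺ * b⁻ - a⁻ * b⁺ + a⁻ * b⁻) = (a⁺ * b⁺ + a⁺ * b⁺) + (a⁻ * b⁻ + a⁻ * b⁻) := by
      abel
    rw [he]
    exact add_nonneg (add_nonneg h1 h1) (add_nonneg h4 h4)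
  exact abs_le'.2 ⟨hle, hle'⟩

theorem latAbs_eq_zero {x : E} (h : |x| = 0) : x = 0 := by
  have h1 : x ≤ 0 := le_trans (le_abs_self x) h.le
  have h2 : -x ≤ 0 := le_trans (neg_le_abs x) h.le
  exact le_antisymm h1 (by simpa using h2)

theorem nsmul_nonneg' {a : E} (ha : 0 ≤ a) (n : ℕ) : 0 ≤ n • a := by
  induction n with
  | zero => simp
  | succ k ih => rw [succ_nsmul]; exact add_nonneg ih ha

theorem nsmul_le_nsmul' {a b : E} (h : a ≤ b) (n : ℕ) : n • a ≤ n • b := by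
  induction n with
  | zero => simp
  | succ k ih => rw [succ_nsmul, succ_nsmul]; exact add_le_add ih h

theorem nsmul_le_nsmul_scalar {a : E} (ha : 0 ≤ a) {m n : ℕ} (h : m ≤ n) :
    m • a ≤ n • a := by
  obtain ⟨k, rfl⟩ := Nat.exists_eq_add_of_le h
  rw [add_nsmul]
  exact le_add_of_nonneg_right (nsmul_nonneg' ha k)

theorem posPart_add_le (a b : E) : (a + b)⁺ ≤ a⁺ + b⁺ :=
  sup_le (add_le_add (le_posPart a) (le_posPart b))
    (add_nonneg (posPart_nonneg a) (posPart_nonneg b))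

theorem neg_le_negPart' (b : E) : -b ≤ b⁻ := le_sup_left

theorem posPart_sub_le (a b : E) : (a - b)⁺ ≤ a⁺ + b⁻ :=
  sup_le (by rw [sub_eq_add_neg]; exact add_le_add (le_posPart a) (neg_le_negPart' b))
    (add_nonneg (posPart_nonneg a) (negPart_nonneg b))

theorem inf_add_est {s t v : E} (hs : 0 ≤ s) (ht : 0 ≤ t) (hv : 0 ≤ v) :
    (s + t) ⊓ v ≤ s ⊓ v + t ⊓ v := by
  have h1 : (s + t) ⊓ v ≤ s ⊓ v + t := by
    have e1 : s ⊓ v + t = (s + t) ⊓ (v + t) := by rw [inf_add]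
    rw [e1]
    exact inf_le_inf_left _ (le_add_of_nonneg_right ht)
  have h2 : (s + t) ⊓ v ≤ s ⊓ v + v :=
    le_trans inf_le_right (le_add_of_nonneg_left (le_inf hs hv))
  have h3 : s ⊓ v + t ⊓ v = (s ⊓ v + t) ⊓ (s ⊓ v + v) := by rw [add_inf]
  rw [h3]
  exact le_inf h1 h2

theorem inf_nsmul_eq_zero {a b : E} (h : a ⊓ b = 0) (n : ℕ) : a ⊓ n • b = 0 := by
  have ha : 0 ≤ a := h ▸ inf_le_left
  have hb : 0 ≤ b := h ▸ inf_le_right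
  induction n with
  | zero => simp [inf_of_le_right ha]
  | succ k ih =>
    have h0 : 0 ≤ a ⊓ (k • b + b) := le_inf ha (add_nonneg (nsmul_nonneg' hb k) hb)
    have h1 : a ⊓ (k • b + b) ≤ k • b ⊓ a + b ⊓ a := by
      rw [inf_comm]
      exact inf_add_est (nsmul_nonneg' hb k) hb ha
    rw [inf_comm (k • b) a, inf_comm b a, ih, h, add_zero] at h1
    rw [succ_nsmul]
    exact le_antisymm h1 h0

theorem nsmul_inf_eq_zero {a b : E} (h : a ⊓ b = 0) (n m : ℕ) : n • a ⊓ m • b = 0 := by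
  have hb : 0 ≤ b := h ▸ inf_le_right
  have h1 : a ⊓ m • b = 0 := inf_nsmul_eq_zero h m
  rw [inf_comm] at h1
  have h2 : m • b ⊓ n • a = 0 := inf_nsmul_eq_zero h1 n
  rw [inf_comm] at h2; exact h2

theorem nsmul_inf' (a b : E) (n : ℕ) : n • (a ⊓ b) = n • a ⊓ n • b := by
  set i := a ⊓ b with hi
  have ha' : 0 ≤ a - i := sub_nonneg.2 inf_le_left
  have hb' : 0 ≤ b - i := sub_nonneg.2 inf_le_right
  have hd : (a - i) ⊓ (b - i) = 0 := by rw [← inf_sub]; simp [hi]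
  have h0 : n • (a - i) ⊓ n • (b - i) = 0 := nsmul_inf_eq_zero hd n n
  have e1 : n • a = n • (a - i) + n • i := by rw [← smul_add]; congr 1; abel
  have e2 : n • b = n • (b - i) + n • i := by rw [← smul_add]; congr 1; abel
  rw [e1, e2, ← inf_add, h0, zero_add]

theorem nsmul_sup' (a b : E) (n : ℕ) : n • (a ⊔ b) = n • a ⊔ n • b := by
  have h1 : (a ⊓ b) + (a ⊔ b) = a + b := inf_add_sup a b
  have h2 : (n • a ⊓ n • b) + (n • a ⊔ n • b) = n • a + n • b := inf_add_sup _ _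
  have h3 : n • (a ⊓ b) + n • (a ⊔ b) = n • a + n • b := by
    rw [← smul_add, h1, smul_add]
  rw [nsmul_inf'] at h3
  have := h3.trans h2.symm
  exact add_left_cancel this

theorem abs_nsmul' (c : E) (n : ℕ) : |n • c| = n • |c| := by
  have : |n • c| = n • c ⊔ -(n • c) := rfl
  rw [this, ← smul_neg, ← nsmul_sup']
  rfl

example (a b : E) (n : ℕ) : a * (n • b) = n • (a * b) := mul_smul_comm n a b
example (a b : E) (n : ℕ) : (n • a) * b = n • (a * b) := smul_mul_assoc n a b
example (a : E) (m n : ℕ) : (m * n) • a = m • (n • a) := mul_smul m n a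

/-- An `ℓ`-ideal: a solid (two-sided) ring ideal. -/
structure IsLI (S : Set E) : Prop where
  zero_mem : (0 : E) ∈ S
  add_mem : ∀ {x y : E}, x ∈ S → y ∈ S → x + y ∈ S
  solid : ∀ {x y : E}, |x| ≤ |y| → y ∈ S → x ∈ S
  mul_left : ∀ (r : E) {x : E}, x ∈ S → r * x ∈ S
  mul_right : ∀ (r : E) {x : E}, x ∈ S → x * r ∈ S

/-- A prime `ℓ`-ideal. -/
def IsPrimeLI (S : Set E) : Prop :=
  IsLI S ∧ ∀ ⦃a b : E⦄, 0 ≤ a → 0 ≤ b → a ⊓ b = 0 → a ∈ S ∨ b ∈ S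

theorem exists_prime_not_mem (w : E) (hw : w ≠ 0) : ∃ S : Set E, IsPrimeLI S ∧ w ∉ S := by
  classical
  set w₀ : E := |w| with hw₀
  have hw₀ne : ∀ S : Set E, IsLI S → (w₀ ∉ S ↔ w ∉ S) := by
    intro S hS
    constructor
    · intro h hmem; exact h (hS.solid (abs_abs w).le hmem)
    · intro h hmem; exact h (hS.solid (abs_abs w).ge hmem)
  -- the trivial ideal
  have htriv : IsLI ({0} : Set E) := by
    refine ⟨rfl, ?_, ?_, ?_, ?_⟩
    · rintro x y rfl rfl; simp
    · rintro x y h rfl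
      simp only [abs_zero] at h
      have : |x| = 0 := le_antisymm h (abs_nonneg x)
      simpa using latAbs_eq_zero this
    · rintro r x rfl; simp
    · rintro r x rfl; simp
  have hw₀triv : w₀ ∉ ({0} : Set E) := by
    simp only [Set.mem_singleton_iff, hw₀]
    exact fun h => hw (latAbs_eq_zero h)
  -- Zorn's lemma
  set 𝒮 : Set (Set E) := {S | IsLI S ∧ w₀ ∉ S} with h𝒮
  have Hchain : ∀ c ⊆ 𝒮, IsChain (· ⊆ ·) c → c.Nonempty →
      ∃ ub ∈ 𝒮, ∀ s ∈ c, s ⊆ ub := by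
    intro c hc hchain hne
    refine ⟨⋃₀ c, ⟨⟨?_, ?_, ?_, ?_, ?_⟩, ?_⟩, fun s hs => Set.subset_sUnion_of_mem hs⟩
    · obtain ⟨s, hs⟩ := hne
      exact Set.mem_sUnion.2 ⟨s, hs, (hc hs).1.zero_mem⟩
    · rintro x y ⟨s, hs, hxs⟩ ⟨t, ht, hyt⟩
      rcases hchain.total hs ht with hst | hts
      · exact Set.mem_sUnion.2 ⟨t, ht, ((hc ht).1.add_mem (hst hxs) hyt)⟩
      · exact Set.mem_sUnion.2 ⟨s, hs, ((hc hs).1.add_mem hxs (hts hyt))⟩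
    · rintro x y hxy ⟨s, hs, hys⟩
      exact Set.mem_sUnion.2 ⟨s, hs, ((hc hs).1.solid hxy hys)⟩
    · rintro r x ⟨s, hs, hxs⟩
      exact Set.mem_sUnion.2 ⟨s, hs, ((hc hs).1.mul_left r hxs)⟩
    · rintro r x ⟨s, hs, hxs⟩
      exact Set.mem_sUnion.2 ⟨s, hs, ((hc hs).1.mul_right r hxs)⟩
    · rintro ⟨s, hs, hws⟩
      exact (hc hs).2 hws
  obtain ⟨M, -, hMmax⟩ := zorn_subset_nonempty 𝒮 Hchain ({0} : Set E) ⟨htriv, hw₀triv⟩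
  have hMLI : IsLI M := hMmax.prop.1
  have hMw₀ : w₀ ∉ M := hMmax.prop.2
  refine ⟨M, ⟨hMLI, ?_⟩, (hw₀ne M hMLI).1 hMw₀⟩
  -- primality
  intro a b ha hb hab
  by_contra hcon
  push_neg at hcon
  obtain ⟨haM, hbM⟩ := hcon
  -- the pseudo-band of an element
  set D : E → Set E := fun x => {t | 0 ≤ t ∧ ∀ v, 0 ≤ v → x ⊓ v = 0 → t ⊓ v = 0} with hD
  set J : E → Set E := fun x =>
    {z | ∃ m t, m ∈ M ∧ 0 ≤ m ∧ t ∈ D x ∧ |z| ≤ m + t} with hJ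
  have hDself : ∀ x : E, 0 ≤ x → x ∈ D x := fun x hx => ⟨hx, fun v _ h => h⟩
  have hDzero : ∀ x : E, (0 : E) ∈ D x := by
    intro x
    exact ⟨le_refl 0, fun v hv _ => by simp [inf_of_le_left hv]⟩
  have hDadd : ∀ x : E, ∀ {t t' : E}, t ∈ D x → t' ∈ D x → t + t' ∈ D x := by
    rintro x t t' ⟨ht0, ht⟩ ⟨ht0', ht'⟩
    refine ⟨add_nonneg ht0 ht0', fun v hv hxv => ?_⟩
    have h1 : (t + t') ⊓ v ≤ t ⊓ v + t' ⊓ v := inf_add_est ht0 ht0' hv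
    rw [ht v hv hxv, ht' v hv hxv, add_zero] at h1
    exact le_antisymm h1 (le_inf (add_nonneg ht0 ht0') hv)
  have hDmulL : ∀ x : E, ∀ (r : E), 0 ≤ r → ∀ {t : E}, t ∈ D x → r * t ∈ D x := by
    rintro x r hr t ⟨ht0, ht⟩
    exact ⟨bmul_nonneg hr ht0, fun v hv hxv =>
      BanachLatticeFAlgebra.inf_mul_left t v r hr (ht v hv hxv)⟩
  have hDmulR : ∀ x : E, ∀ (r : E), 0 ≤ r → ∀ {t : E}, t ∈ D x → t * r ∈ D x := by
    rintro x r hr t ⟨ht0, ht⟩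
    exact ⟨bmul_nonneg ht0 hr, fun v hv hxv =>
      BanachLatticeFAlgebra.inf_mul_right t v r hr (ht v hv hxv)⟩
  have hJLI : ∀ x : E, 0 ≤ x → IsLI (J x) := by
    intro x hx
    refine ⟨⟨0, 0, hMLI.zero_mem, le_refl 0, hDzero x, by simp⟩, ?_, ?_, ?_, ?_⟩
    · rintro z z' ⟨m, t, hm, hm0, htD, hzt⟩ ⟨m', t', hm', hm0', htD', hzt'⟩
      refine ⟨m + m', t + t', hMLI.add_mem hm hm', add_nonneg hm0 hm0',
        hDadd x htD htD', ?_⟩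
      calc |z + z'| ≤ |z| + |z'| := abs_add_le z z'
      _ ≤ (m + t) + (m' + t') := add_le_add hzt hzt'
      _ = (m + m') + (t + t') := by abel
    · rintro z z' hzz' ⟨m, t, hm, hm0, htD, hzt⟩
      exact ⟨m, t, hm, hm0, htD, le_trans hzz' hzt⟩
    · rintro r z ⟨m, t, hm, hm0, htD, hzt⟩
      refine ⟨|r| * m, |r| * t, hMLI.mul_left |r| hm,
        bmul_nonneg (abs_nonneg r) hm0, hDmulL x |r| (abs_nonneg r) htD, ?_⟩
      calc |r * z| ≤ |r| * |z| := latAbs_mul_le r z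
      _ ≤ |r| * (m + t) := bmul_le_mul_left _ (abs_nonneg r) hzt
      _ = |r| * m + |r| * t := mul_add _ _ _
    · rintro r z ⟨m, t, hm, hm0, htD, hzt⟩
      refine ⟨m * |r|, t * |r|, hMLI.mul_right |r| hm,
        bmul_nonneg hm0 (abs_nonneg r), hDmulR x |r| (abs_nonneg r) htD, ?_⟩
      calc |z * r| ≤ |z| * |r| := latAbs_mul_le z r
      _ ≤ (m + t) * |r| := bmul_le_mul_right _ (abs_nonneg r) hzt
      _ = m * |r| + t * |r| := add_mul _ _ _
  have hMsubJ : ∀ x : E, M ⊆ J x := by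
    intro x z hz
    refine ⟨|z|, 0, hMLI.solid (abs_abs z).le hz, abs_nonneg z, hDzero x, by simp⟩
  have hxJ : ∀ x : E, 0 ≤ x → x ∈ J x := by
    intro x hx
    exact ⟨0, x, hMLI.zero_mem, le_refl 0, hDself x hx, by rw [abs_of_nonneg hx, zero_add]⟩
  -- by maximality, w₀ belongs to both J a and J b
  have hw₀J : ∀ x : E, 0 ≤ x → x ∉ M → w₀ ∈ J x := by
    intro x hx hxM
    by_contra hw₀Jx
    have : M = J x := hMmax.eq_of_subset ⟨hJLI x hx, hw₀Jx⟩ (hMsubJ x)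
    exact hxM (this ▸ hxJ x hx)
  obtain ⟨m₁, t₁, hm₁, hm₁0, ht₁D, hw₁⟩ := hw₀J a ha haM
  obtain ⟨m₂, t₂, hm₂, hm₂0, ht₂D, hw₂⟩ := hw₀J b hb hbM
  -- t₁ and t₂ are disjoint
  have ht₂a : t₂ ⊓ a = 0 := ht₂D.2 a ha (by rwa [inf_comm] at hab)
  have ht₁t₂ : t₁ ⊓ t₂ = 0 := ht₁D.2 t₂ ht₂D.1 (by rwa [inf_comm] at ht₂a)
  -- hence w₀ ≤ m₁ + m₂ and so w₀ ∈ M, a contradiction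
  have hw₀le : |w₀| ≤ m₁ + m₂ := by
    have h1 : |w₀| ≤ (m₁ + t₁) ⊓ (m₂ + t₂) := le_inf hw₁ hw₂
    have h2 : (m₁ + t₁) ⊓ (m₂ + t₂) ≤ (m₁ + m₂) + t₁ ⊓ t₂ := by
      have e1 : (m₁ + t₁) ⊓ (m₂ + t₂) ≤ (m₁ + m₂ + t₁) ⊓ (m₁ + m₂ + t₂) := by
        apply inf_le_inf
        · exact add_le_add_left (le_add_of_nonneg_right hm₂0) t₁
        · rw [add_comm m₁ m₂]
          exact add_le_add_left (le_add_of_nonneg_right hm₁0) t₂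
      calc (m₁ + t₁) ⊓ (m₂ + t₂) ≤ (m₁ + m₂ + t₁) ⊓ (m₁ + m₂ + t₂) := e1
      _ = m₁ + m₂ + t₁ ⊓ t₂ := (add_inf _ _ _).symm
      _ = (m₁ + m₂) + t₁ ⊓ t₂ := rfl
    rw [ht₁t₂, add_zero] at h2
    exact le_trans h1 h2
  have : |w₀| ≤ |m₁ + m₂| := by
    rwa [abs_of_nonneg (add_nonneg hm₁0 hm₂0)]
  exact hMw₀ (hMLI.solid this (hMLI.add_mem hm₁ hm₂))

/-- The total preorder modulo a prime ℓ-ideal. -/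
def LeM (M : Set E) (x y : E) : Prop := (x - y)⁺ ∈ M

section LeM

variable {M : Set E}

theorem solid_nonneg (hM : IsLI M) {u v : E} (hu : 0 ≤ u) (huv : u ≤ v) (hv : 0 ≤ v)
    (hvM : v ∈ M) : u ∈ M :=
  hM.solid (by rw [abs_of_nonneg hu, abs_of_nonneg hv]; exact huv) hvM

theorem negPart_le_abs' (a : E) : a⁻ ≤ |a| := by
  rw [← posPart_add_negPart]
  exact le_add_of_nonneg_left (posPart_nonneg a)

theorem posPart_le_abs' (a : E) : a⁺ ≤ |a| := by
  rw [← posPart_add_negPart]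
  exact le_add_of_nonneg_right (negPart_nonneg a)

theorem posPart_sup' (a b : E) : (a ⊔ b)⁺ = a⁺ ⊔ b⁺ := by
  show (a ⊔ b) ⊔ 0 = (a ⊔ 0) ⊔ (b ⊔ 0)
  rw [sup_sup_sup_comm, sup_idem]

theorem leM_refl (hM : IsLI M) (x : E) : LeM M x x := by
  unfold LeM
  rw [sub_self]
  have : (0 : E)⁺ = 0 := posPart_eq_zero.2 le_rfl
  rw [this]; exact hM.zero_mem

theorem leM_of_le (hM : IsLI M) {x y : E} (h : x ≤ y) : LeM M x y := by
  unfold LeM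
  rw [posPart_eq_zero.2 (sub_nonpos.2 h)]
  exact hM.zero_mem

theorem leM_trans (hM : IsLI M) {x y z : E} (h1 : LeM M x y) (h2 : LeM M y z) :
    LeM M x z := by
  unfold LeM at *
  have he : x - z = (x - y) + (y - z) := by abel
  have hle : (x - z)⁺ ≤ (x - y)⁺ + (y - z)⁺ := by rw [he]; exact posPart_add_le _ _
  exact solid_nonneg hM (posPart_nonneg _) hle
    (add_nonneg (posPart_nonneg _) (posPart_nonneg _)) (hM.add_mem h1 h2)

theorem negPart_eq_posPart_neg (a : E) : a⁻ = (-a)⁺ := rfl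

theorem leM_total (hM : IsPrimeLI M) (x y : E) : LeM M x y ∨ LeM M y x := by
  rcases hM.2 (posPart_nonneg (x - y)) (negPart_nonneg (x - y))
      (posPart_inf_negPart_eq_zero (x - y)) with h | h
  · exact Or.inl h
  · right
    unfold LeM
    have : y - x = -(x - y) := by abel
    rw [this, ← negPart_eq_posPart_neg]
    exact h

theorem leM_add (hM : IsLI M) {a b c d : E} (h1 : LeM M a b) (h2 : LeM M c d) :
    LeM M (a + c) (b + d) := by
  unfold LeM at *
  have he : a + c - (b + d) = (a - b) + (c - d) := by abel
  have hle : (a + c - (b + d))⁺ ≤ (a - b)⁺ + (c - d)⁺ := by rw [he]; exact posPart_add_le _ _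
  exact solid_nonneg hM (posPart_nonneg _) hle
    (add_nonneg (posPart_nonneg _) (posPart_nonneg _)) (hM.add_mem h1 h2)

theorem leM_nsmul (hM : IsLI M) {a b : E} (n : ℕ) (h : LeM M a b) :
    LeM M (n • a) (n • b) := by
  induction n with
  | zero => simpa using leM_refl hM 0
  | succ k ih =>
    rw [succ_nsmul, succ_nsmul]
    exact leM_add hM ih h

theorem leM_sub_right (hM : IsLI M) {x y : E} (hy : LeM M 0 y) : LeM M (x - y) x := by
  unfold LeM at *
  have he : x - y - x = 0 - y := by abel
  rw [he]
  exact hy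

theorem leM_sup (hM : IsLI M) {x y z : E} (h1 : LeM M x z) (h2 : LeM M y z) :
    LeM M (x ⊔ y) z := by
  unfold LeM at *
  have he : x ⊔ y - z = (x - z) ⊔ (y - z) := by rw [sup_sub]
  have hle : (x ⊔ y - z)⁺ ≤ (x - z)⁺ + (y - z)⁺ := by
    rw [he, posPart_sup']
    exact sup_le (le_add_of_nonneg_right (posPart_nonneg _))
      (le_add_of_nonneg_left (posPart_nonneg _))
  exact solid_nonneg hM (posPart_nonneg _) hle
    (add_nonneg (posPart_nonneg _) (posPart_nonneg _)) (hM.add_mem h1 h2)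

theorem leM_zero_iff_negPart (c : E) : LeM M 0 c ↔ c⁻ ∈ M := by
  unfold LeM
  rw [zero_sub, ← negPart_eq_posPart_neg]

theorem leM_mul_left (hM : IsLI M) {a b c : E} (hc : LeM M 0 c) (h : LeM M a b) :
    LeM M (c * a) (c * b) := by
  have hc' : c⁻ ∈ M := (leM_zero_iff_negPart c).1 hc
  unfold LeM at *
  set d := a - b with hd
  have he : c * a - c * b = c * d := by rw [hd, mul_sub]
  have he2 : c * d = c⁺ * d - c⁻ * d := by
    rw [← sub_mul, posPart_sub_negPart]
  have hstep1 : (c * d)⁺ ≤ (c⁺ * d)⁺ + (c⁻ * d)⁻ := by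
    rw [he2]; exact posPart_sub_le _ _
  have hstep2 : (c⁺ * d)⁺ ≤ c⁺ * d⁺ := by
    have : c⁺ * d = c⁺ * d⁺ - c⁺ * d⁻ := by rw [← mul_sub, posPart_sub_negPart]
    rw [this]
    refine le_trans (posPart_sub_le _ _) ?_
    rw [posPart_eq_self.2 (bmul_nonneg (posPart_nonneg c) (posPart_nonneg d)),
      negPart_eq_zero.2 (bmul_nonneg (posPart_nonneg c) (negPart_nonneg d)), add_zero]
  have hstep3 : (c⁻ * d)⁻ ≤ c⁻ * |d| := by
    refine le_trans (negPart_le_abs' _) ?_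
    refine le_trans (latAbs_mul_le _ _) ?_
    rw [abs_of_nonneg (negPart_nonneg c)]
  have hle : (c * a - c * b)⁺ ≤ c⁺ * d⁺ + c⁻ * |d| := by
    rw [he]
    exact le_trans hstep1 (add_le_add hstep2 hstep3)
  refine solid_nonneg hM (posPart_nonneg _) hle
    (add_nonneg (bmul_nonneg (posPart_nonneg c) (posPart_nonneg d))
      (bmul_nonneg (negPart_nonneg c) (abs_nonneg d))) ?_
  exact hM.add_mem (hM.mul_left c⁺ h) (hM.mul_right |d| hc')

theorem leM_mul_right (hM : IsLI M) {a b c : E} (hc : LeM M 0 c) (h : LeM M a b) :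
    LeM M (a * c) (b * c) := by
  have hc' : c⁻ ∈ M := (leM_zero_iff_negPart c).1 hc
  unfold LeM at *
  set d := a - b with hd
  have he : a * c - b * c = d * c := by rw [hd, sub_mul]
  have he2 : d * c = d * c⁺ - d * c⁻ := by
    rw [← mul_sub, posPart_sub_negPart]
  have hstep1 : (d * c)⁺ ≤ (d * c⁺)⁺ + (d * c⁻)⁻ := by
    rw [he2]; exact posPart_sub_le _ _
  have hstep2 : (d * c⁺)⁺ ≤ d⁺ * c⁺ := by
    have : d * c⁺ = d⁺ * c⁺ - d⁻ * c⁺ := by rw [← sub_mul, posPart_sub_negPart]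
    rw [this]
    refine le_trans (posPart_sub_le _ _) ?_
    rw [posPart_eq_self.2 (bmul_nonneg (posPart_nonneg d) (posPart_nonneg c)),
      negPart_eq_zero.2 (bmul_nonneg (negPart_nonneg d) (posPart_nonneg c)), add_zero]
  have hstep3 : (d * c⁻)⁻ ≤ |d| * c⁻ := by
    refine le_trans (negPart_le_abs' _) ?_
    refine le_trans (latAbs_mul_le _ _) ?_
    rw [abs_of_nonneg (negPart_nonneg c)]
  have hle : (a * c - b * c)⁺ ≤ d⁺ * c⁺ + |d| * c⁻ := by
    rw [he]
    exact le_trans hstep1 (add_le_add hstep2 hstep3)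
  refine solid_nonneg hM (posPart_nonneg _) hle
    (add_nonneg (bmul_nonneg (posPart_nonneg d) (posPart_nonneg c))
      (bmul_nonneg (abs_nonneg d) (negPart_nonneg c))) ?_
  exact hM.add_mem (hM.mul_right c⁺ h) (hM.mul_left |d| hc')

theorem leM_nonneg_mul (hM : IsLI M) {a b : E} (ha : LeM M 0 a) (hb : LeM M 0 b) :
    LeM M 0 (a * b) := by
  have := leM_mul_left hM ha hb
  rwa [mul_zero] at this

end LeM

section Euclid

variable {M : Set E}

theorem leM_abs_le (hM : IsLI M) {c e : E} (h1 : LeM M c e) (h2 : LeM M (-c) e) :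
    LeM M |c| e := by
  have : |c| = c ⊔ -c := rfl
  rw [this]
  exact leM_sup hM h1 h2

theorem leM_sq_le_sq (hM : IsPrimeLI M) {t p : E} (h0t : LeM M 0 t) (h0p : LeM M 0 p)
    (htp : LeM M t p) : LeM M (t * t) (p * p) :=
  leM_trans hM.1 (leM_mul_left hM.1 h0t htp) (leM_mul_right hM.1 h0p htp)

theorem sq_le_four_smul (p : E) : p * p ≤ (4 : ℕ) • (p * p) := by
  have h := nsmul_le_nsmul_scalar (sq_nonneg' p) (by norm_num : 1 ≤ 4)
  rwa [one_smul] at h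

theorem euclid_step (hM : IsPrimeLI M) (K : ℕ) :
    ∀ p q : E, LeM M 0 q → LeM M q p →
      LeM M ((2 ^ K) • |p * q - q * p|) ((4 : ℕ) • (p * p)) := by
  classical
  induction K with
  | zero =>
    intro p q h0q hqp
    have h0p : LeM M 0 p := leM_trans hM.1 h0q hqp
    set c := p * q - q * p with hc
    have h1 : LeM M (p * q) (p * p) := leM_mul_left hM.1 h0p hqp
    have h2 : LeM M (q * p) (p * p) := leM_mul_right hM.1 h0p hqp
    have h3 : LeM M 0 (q * p) := leM_nonneg_mul hM.1 h0q h0p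
    have h4 : LeM M 0 (p * q) := leM_nonneg_mul hM.1 h0p h0q
    have hcle : LeM M c (p * p) := leM_trans hM.1 (leM_sub_right hM.1 h3) h1
    have hncle : LeM M (-c) (p * p) := by
      have he : -c = q * p - p * q := by rw [hc]; abel
      rw [he]
      exact leM_trans hM.1 (leM_sub_right hM.1 h4) h2
    have habs : LeM M |c| (p * p) := leM_abs_le hM.1 hcle hncle
    rw [pow_zero, one_smul]
    exact leM_trans hM.1 habs (leM_of_le hM.1 (sq_le_four_smul p))
  | succ K ih =>
    intro p q h0q hqp
    have h0p : LeM M 0 p := leM_trans hM.1 h0q hqp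
    set c := p * q - q * p with hc
    -- a helper for the "all multiples below" case
    have main_bounded : ∀ p' q' : E, LeM M 0 q' → LeM M q' p' →
        (∀ n : ℕ, LeM M (n • q') p') →
        p' * q' - q' * p' = c ∨ p' * q' - q' * p' = -c →
        LeM M ((2 ^ (K + 1)) • |c|) ((4 : ℕ) • (p * p)) →
        True := fun _ _ _ _ _ _ _ => trivial
    clear main_bounded
    by_cases hall : ∀ n : ℕ, LeM M (n • q) p
    · -- q is infinitesimal with respect to p modulo M
      set m := 2 ^ (K + 1) with hm
      have hmc : m • c = p * (m • q) - (m • q) * p := by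
        rw [hc, smul_sub, mul_smul_comm, smul_mul_assoc]
      have h0mq : LeM M 0 (m • q) := by
        have := leM_nsmul hM.1 m h0q
        rwa [smul_zero] at this
      have key1 : LeM M (m • c) (p * p) := by
        rw [hmc]
        exact leM_trans hM.1 (leM_sub_right hM.1 (leM_nonneg_mul hM.1 h0mq h0p))
          (leM_mul_left hM.1 h0p (hall m))
      have key2 : LeM M (-(m • c)) (p * p) := by
        have he : -(m • c) = (m • q) * p - p * (m • q) := by rw [hmc]; abel
        rw [he]
        exact leM_trans hM.1 (leM_sub_right hM.1 (leM_nonneg_mul hM.1 h0p h0mq))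
          (leM_mul_right hM.1 h0p (hall m))
      have habs : LeM M |m • c| (p * p) := by
        have : |m • c| = (m • c) ⊔ (-(m • c)) := rfl
        rw [this]
        exact leM_sup hM.1 key1 key2
      rw [abs_nsmul'] at habs
      exact leM_trans hM.1 habs (leM_of_le hM.1 (sq_le_four_smul p))
    · push_neg at hall
      have hex : ∃ n : ℕ, ¬ LeM M (n • q) p := hall
      set mm := Nat.find hex with hmm
      have hmm_spec : ¬ LeM M (mm • q) p := Nat.find_spec hex
      have hmm_min : ∀ k, k < mm → LeM M (k • q) p := fun k hk =>
        of_not_not (Nat.find_min hex hk)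
      have h2le : 2 ≤ mm := by
        by_contra hlt
        push_neg at hlt
        interval_cases mm
        · exact hmm_spec (by simpa using leM_trans hM.1 h0q hqp)
        · exact hmm_spec (by simpa using hqp)
      set j := mm - 1 with hj
      have hj1 : 1 ≤ j := by omega
      have hjsucc : j + 1 = mm := by omega
      have hjq : LeM M (j • q) p := hmm_min j (by omega)
      have hpj : LeM M p ((j + 1) • q) := by
        rcases leM_total hM p ((j + 1) • q) with h | h
        · exact h
        · exact absurd (hjsucc ▸ h) hmm_spec
      set r := p - j • q with hr
      have h0r : LeM M 0 r := by
        unfold LeM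
        have he : (0 : E) - r = j • q - p := by rw [hr]; abel
        rw [he]
        exact hjq
      have hrq : LeM M r q := by
        unfold LeM
        have he : r - q = p - (j + 1) • q := by rw [hr, succ_nsmul]; abel
        rw [he]
        exact hpj
      have hcrq : c = r * q - q * r := by
        rw [hc, hr, sub_mul, mul_sub, smul_mul_assoc, mul_smul_comm]
        abel
      by_cases hall2 : ∀ n : ℕ, LeM M (n • r) q
      · set m := 2 ^ (K + 1) with hm
        have hmc : m • c = (m • r) * q - q * (m • r) := by
          rw [hcrq, smul_sub, mul_smul_comm, smul_mul_assoc]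
        have h0mr : LeM M 0 (m • r) := by
          have := leM_nsmul hM.1 m h0r
          rwa [smul_zero] at this
        have hq2 : LeM M (q * q) (p * p) := leM_sq_le_sq hM h0q h0p hqp
        have key1 : LeM M (m • c) (p * p) := by
          rw [hmc]
          refine leM_trans hM.1 (leM_sub_right hM.1 (leM_nonneg_mul hM.1 h0q h0mr)) ?_
          exact leM_trans hM.1 (leM_mul_right hM.1 h0q (hall2 m)) hq2
        have key2 : LeM M (-(m • c)) (p * p) := by
          have he : -(m • c) = q * (m • r) - (m • r) * q := by rw [hmc]; abel
          rw [he]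
          refine leM_trans hM.1 (leM_sub_right hM.1 (leM_nonneg_mul hM.1 h0mr h0q)) ?_
          exact leM_trans hM.1 (leM_mul_left hM.1 h0q (hall2 m)) hq2
        have habs : LeM M |m • c| (p * p) := by
          have : |m • c| = (m • c) ⊔ (-(m • c)) := rfl
          rw [this]
          exact leM_sup hM.1 key1 key2
        rw [abs_nsmul'] at habs
        exact leM_trans hM.1 habs (leM_of_le hM.1 (sq_le_four_smul p))
      · push_neg at hall2
        have hex2 : ∃ n : ℕ, ¬ LeM M (n • r) q := hall2
        set ii := Nat.find hex2 with hii
        have hii_spec : ¬ LeM M (ii • r) q := Nat.find_spec hex2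
        have hii_min : ∀ k, k < ii → LeM M (k • r) q := fun k hk =>
          of_not_not (Nat.find_min hex2 hk)
        have h2le2 : 2 ≤ ii := by
          by_contra hlt
          push_neg at hlt
          interval_cases ii
          · exact hii_spec (by simpa using h0q)
          · exact hii_spec (by simpa using hrq)
        set i := ii - 1 with hi
        have hisucc : i + 1 = ii := by omega
        have hir : LeM M (i • r) q := hii_min i (by omega)
        have hqi : LeM M q ((i + 1) • r) := by
          rcases leM_total hM q ((i + 1) • r) with h | h
          · exact h
          · exact absurd (hisucc ▸ h) hii_spec
        set s := q - i • r with hs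
        have h0s : LeM M 0 s := by
          unfold LeM
          have he : (0 : E) - s = i • r - q := by rw [hs]; abel
          rw [he]
          exact hir
        have hsr : LeM M s r := by
          unfold LeM
          have he : s - r = q - (i + 1) • r := by rw [hs, succ_nsmul]; abel
          rw [he]
          exact hqi
        have hcs : c = r * s - s * r := by
          have hq : q = s + i • r := by rw [hs]; abel
          rw [hcrq, hq, mul_add, add_mul, mul_smul_comm, smul_mul_assoc]
          abel
        have IH : LeM M ((2 ^ K) • |c|) ((4 : ℕ) • (r * r)) := by
          have := ih r s h0s hsr
          rwa [← hcs] at this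
        -- 2 • r ≼ p
        have htr : LeM M ((2 : ℕ) • r) p := by
          have h1 : LeM M (r + r) (r + q) := leM_add hM.1 (leM_refl hM.1 r) hrq
          have he : r + q = p - (j - 1) • q := by
            rw [hr]
            have hj' : j • q = (j - 1) • q + q := by
              conv_lhs => rw [show j = (j - 1) + 1 by omega]
              rw [succ_nsmul]
            rw [hj']
            abel
          have h0jq : LeM M 0 ((j - 1) • q) := by
            have := leM_nsmul hM.1 (j - 1) h0q
            rwa [smul_zero] at this
          have h2 : LeM M (r + q) p := by
            rw [he]
            exact leM_sub_right hM.1 h0jq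
          have h3 := leM_trans hM.1 h1 h2
          have he2 : (2 : ℕ) • r = r + r := by rw [succ_nsmul, one_smul]
          rwa [← he2] at h3
        have h0tr : LeM M 0 ((2 : ℕ) • r) := by
          have := leM_nsmul hM.1 2 h0r
          rwa [smul_zero] at this
        have h4r : LeM M ((4 : ℕ) • (r * r)) (p * p) := by
          have hsq : LeM M (((2 : ℕ) • r) * ((2 : ℕ) • r)) (p * p) :=
            leM_sq_le_sq hM h0tr h0p htr
          have he : ((2 : ℕ) • r) * ((2 : ℕ) • r) = (4 : ℕ) • (r * r) := by
            rw [smul_mul_assoc, mul_smul_comm, ← mul_smul]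
            norm_num
          rwa [he] at hsq
        have hchain1 : LeM M ((2 ^ (K + 1)) • |c|) ((2 : ℕ) • ((4 : ℕ) • (r * r))) := by
          have he : (2 ^ (K + 1)) • |c| = (2 : ℕ) • ((2 ^ K) • |c|) := by
            rw [← mul_smul, ← pow_succ']
          rw [he]
          exact leM_nsmul hM.1 2 IH
        have hchain2 : LeM M ((2 : ℕ) • ((4 : ℕ) • (r * r))) ((2 : ℕ) • (p * p)) :=
          leM_nsmul hM.1 2 h4r
        have hchain3 : LeM M ((2 : ℕ) • (p * p)) ((4 : ℕ) • (p * p)) :=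
          leM_of_le hM.1 (nsmul_le_nsmul_scalar (sq_nonneg' p) (by norm_num))
        exact leM_trans hM.1 (leM_trans hM.1 hchain1 hchain2) hchain3

end Euclid

/-- Commutativity of positive elements: the Birkhoff–Pierce theorem for the
Archimedean f-ring `E`. -/
theorem mul_comm_nonneg {a b : E} (ha : 0 ≤ a) (hb : 0 ≤ b) : a * b = b * a := by
  set c := a * b - b * a with hc
  set e := (4 : ℕ) • (a * a) + (4 : ℕ) • (b * b) with he
  have key : ∀ n : ℕ, n • |c| ≤ e := by
    intro n
    obtain ⟨K, hK⟩ : ∃ K : ℕ, n ≤ 2 ^ K := ⟨n, (Nat.lt_two_pow_self (n := n)).le⟩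
    set v := ((2 ^ K) • |c| - e)⁺ with hv
    have hvmem : ∀ S : Set E, IsPrimeLI S → v ∈ S := by
      intro S hS
      rcases leM_total hS a b with h | h
      · -- a ≼ b : use the pair (b, a)
        have h0a : LeM S 0 a := leM_of_le hS.1 ha
        have heu := euclid_step hS K b a h0a h
        have hcabs : |b * a - a * b| = |c| := by
          have : b * a - a * b = -c := by rw [hc]; abel
          rw [this, abs_neg]
        rw [hcabs] at heu
        have hle2 : LeM S ((4 : ℕ) • (b * b)) e := by
          apply leM_of_le hS.1
          rw [he]
          exact le_add_of_nonneg_left (nsmul_nonneg' (sq_nonneg' a) 4)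
        exact leM_trans hS.1 heu hle2
      · -- b ≼ a : use the pair (a, b)
        have h0b : LeM S 0 b := leM_of_le hS.1 hb
        have heu := euclid_step hS K a b h0b h
        have hle2 : LeM S ((4 : ℕ) • (a * a)) e := by
          apply leM_of_le hS.1
          rw [he]
          exact le_add_of_nonneg_right (nsmul_nonneg' (sq_nonneg' b) 4)
        exact leM_trans hS.1 heu hle2
    have hv0 : v = 0 := by
      by_contra hne
      obtain ⟨S, hS, hvS⟩ := exists_prime_not_mem v hne
      exact hvS (hvmem S hS)
    have hle : (2 ^ K) • |c| ≤ e := by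
      have h := posPart_eq_zero.1 hv0
      exact sub_nonpos.1 h
    calc n • |c| ≤ (2 ^ K) • |c| := nsmul_le_nsmul_scalar (abs_nonneg c) hK
    _ ≤ e := hle
  have harch : |c| ≤ 0 := BanachLatticeFAlgebra.archimedean |c| e (abs_nonneg c) key
  have : |c| = 0 := le_antisymm harch (abs_nonneg c)
  have hc0 : c = 0 := latAbs_eq_zero this
  have := sub_eq_zero.1 (hc ▸ hc0)
  exact this

theorem norm_solid {a b : E} (ha : 0 ≤ a) (hab : a ≤ b) : ‖a‖ ≤ ‖b‖ := by
  have hb : 0 ≤ b := ha.trans hab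
  refine BanachLatticeFAlgebra.solid_norm a b ?_
  show |a| ≤ |b|
  rwa [abs_of_nonneg ha, abs_of_nonneg hb]

end MnAux

open MnAux

variable {E : Type*} [BanachLatticeFAlgebra E] [CompleteSpace E]
variable {A : Type*} [Preorder A] [Nonempty A] [IsDirected A (· ≤ ·)]

variable {B : Type*} [Preorder B] [Nonempty B] [IsDirected B (· ≤ ·)]

/-- If every positive element factors as a product of two positive elements,
then multiplication is jointly mn-continuous. -/
theorem mnTendsto_mul (hfac : ∀ u : E, 0 ≤ u → ∃ u₁ u₂ : E, 0 ≤ u₁ ∧ 0 ≤ u₂ ∧ u = u₁ * u₂)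
    (x : A → E) (y : B → E) (x₀ y₀ : E)
    (hx : MnTendsto atTop x x₀) (hy : MnTendsto atTop y y₀) :
    MnTendsto (atTop : Filter (A × B)) (fun p => x p.1 * y p.2) (x₀ * y₀) := by
  intro u hu
  obtain ⟨u₁, u₂, hu₁, hu₂, huv⟩ := hfac u hu
  have hfst : Tendsto (Prod.fst : A × B → A) atTop atTop := by
    rw [← prod_atTop_atTop_eq]
    exact tendsto_fst
  have hsnd : Tendsto (Prod.snd : A × B → B) atTop atTop := by
    rw [← prod_atTop_atTop_eq]
    exact tendsto_snd
  have hxv : Tendsto (fun p : A × B => ‖latAbs (x p.1 - x₀) * (|y₀| * u)‖) atTop (nhds 0) :=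
    (hx (|y₀| * u) (bmul_nonneg (abs_nonneg y₀) hu)).comp hfst
  have hyu : Tendsto (fun p : A × B => ‖latAbs (y p.2 - y₀) * u‖) atTop (nhds 0) :=
    (hy u hu).comp hsnd
  have hx1 : Tendsto (fun p : A × B => ‖latAbs (x p.1 - x₀) * u₁‖) atTop (nhds 0) :=
    (hx u₁ hu₁).comp hfst
  have hy2 : Tendsto (fun p : A × B => ‖latAbs (y p.2 - y₀) * u₂‖) atTop (nhds 0) :=
    (hy u₂ hu₂).comp hsnd
  set g : A × B → ℝ := fun p =>
    ‖latAbs (x p.1 - x₀) * (|y₀| * u)‖ +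
      (‖(|x₀| : E)‖ * ‖latAbs (y p.2 - y₀) * u‖ +
        ‖latAbs (x p.1 - x₀) * u₁‖ * ‖latAbs (y p.2 - y₀) * u₂‖) with hg
  have hgtend : Tendsto g atTop (nhds 0) := by
    have := hxv.add ((hyu.const_mul ‖(|x₀| : E)‖).add (hx1.mul hy2))
    simpa using this
  refine squeeze_zero (fun p => norm_nonneg _) ?_ hgtend
  intro p
  set a : E := |x p.1 - x₀| with hadef
  set b : E := |y p.2 - y₀| with hbdef
  have ha0 : 0 ≤ a := abs_nonneg _
  have hb0 : 0 ≤ b := abs_nonneg _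
  set D : E := x p.1 * y p.2 - x₀ * y₀ with hD
  have hDeq : D = (x p.1 - x₀) * (y p.2 - y₀) + (x p.1 - x₀) * y₀ + x₀ * (y p.2 - y₀) := by
    rw [hD, mul_sub, sub_mul, mul_sub]
    abel
  have habs1 : |D| ≤ a * b + a * |y₀| + |x₀| * b := by
    calc |D| ≤ |(x p.1 - x₀) * (y p.2 - y₀) + (x p.1 - x₀) * y₀| + |x₀ * (y p.2 - y₀)| := by
          rw [hDeq]; exact abs_add_le _ _
    _ ≤ |(x p.1 - x₀) * (y p.2 - y₀)| + |(x p.1 - x₀) * y₀| + |x₀ * (y p.2 - y₀)| :=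
          add_le_add_left (abs_add_le _ _) _
    _ ≤ a * b + a * |y₀| + |x₀| * b := by
          refine add_le_add (add_le_add ?_ ?_) ?_
          · exact latAbs_mul_le _ _
          · exact latAbs_mul_le _ _
          · exact latAbs_mul_le _ _
  set S : E := a * (|y₀| * u) + (|x₀| * (b * u) + a * b * u) with hS
  have hmulu : |D| * u ≤ S := by
    refine le_trans (bmul_le_mul_right u hu habs1) ?_
    rw [hS, add_mul, add_mul, mul_assoc a |y₀| u, mul_assoc |x₀| b u]
    apply le_of_eq
    abel
  have hT3 : a * b * u = (a * u₁) * (b * u₂) := by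
    rw [huv]
    calc a * b * (u₁ * u₂) = ((a * b) * u₁) * u₂ := (mul_assoc (a * b) u₁ u₂).symm
    _ = (a * (b * u₁)) * u₂ := by rw [mul_assoc a b u₁]
    _ = (a * (u₁ * b)) * u₂ := by rw [mul_comm_nonneg hb0 hu₁]
    _ = ((a * u₁) * b) * u₂ := by rw [← mul_assoc a u₁ b]
    _ = (a * u₁) * (b * u₂) := mul_assoc _ _ _
  have hnorm1 : ‖latAbs D * u‖ ≤ ‖S‖ := by
    rw [latAbs_eq]
    exact norm_solid (bmul_nonneg (abs_nonneg D) hu) hmulu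
  have hnorm2 : ‖S‖ ≤ ‖a * (|y₀| * u)‖ + (‖(|x₀| : E)‖ * ‖b * u‖ + ‖a * u₁‖ * ‖b * u₂‖) := by
    rw [hS]
    refine le_trans (norm_add_le _ _) (add_le_add_right ?_ _)
    refine le_trans (norm_add_le _ _) (add_le_add ?_ ?_)
    · exact norm_mul_le _ _
    · rw [hT3]; exact norm_mul_le _ _
  refine le_trans hnorm1 (le_trans hnorm2 ?_)
  rw [hg]
  simp only [latAbs_eq, ← hadef, ← hbdef]
  exact le_refl _
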